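/- Let {v_k} be a non-negative real sequence satisfying, for all k ≥ 0, v_{k+1} ≤ (1 + a_k) v_k − u_k + w_k, where a_k ≥ 0, u_k ≥ 0, w_k ≥ 0, Σ_{k=0}^∞ a_k < ∞, and Σ_{k=0}^∞ w_k < ∞. Then the sequence {v_k} converges to some v ≥ 0 and Σ_{k=0}^∞ u_k < ∞. -/

import Mathlib

/-- Robbins–Siegmund lemma (deterministic form): an almost-supermartingale-type
non-negative sequence converges and the compensator terms are summable. -/
theorem robbins_siegmund (v a u w : ℕ → ℝ)
    (hv : ∀ k, 0 ≤ v k) (ha : ∀ k, 0 ≤ a k) (hu : ∀ k, 0 ≤ u k) (hw : ∀ k, 0 ≤ w k)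
    (hrec : ∀ k, v (k + 1) ≤ (1 + a k) * v k - u k + w k)
    (hsa : Summable a) (hsw : Summable w) :
    (∃ vlim : ℝ, 0 ≤ vlim ∧ Filter.Tendsto v Filter.atTop (nhds vlim)) ∧ Summable u := by
  classical
  set P : ℕ → ℝ := fun k => ∏ j ∈ Finset.range k, (1 + a j) with hPdef
  have hP1 : ∀ k, 1 ≤ P k := by
    intro k
    induction k with
    | zero => simp [hPdef]
    | succ n ih =>
      have : P (n + 1) = P n * (1 + a n) := Finset.prod_range_succ _ n
      rw [this]
      nlinarith [ha n]
  have hPpos : ∀ k, 0 < P k := fun k => lt_of_lt_of_le one_pos (hP1 k)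
  have hPsucc : ∀ k, P (k + 1) = P k * (1 + a k) := fun k => Finset.prod_range_succ _ k
  have hPB : ∀ k, P k ≤ Real.exp (∑' j, a j) := by
    intro k
    calc P k ≤ ∏ j ∈ Finset.range k, Real.exp (a j) := by
          apply Finset.prod_le_prod
          · intro i _; linarith [ha i]
          · intro i _; linarith [Real.add_one_le_exp (a i)]
      _ = Real.exp (∑ j ∈ Finset.range k, a j) := (Real.exp_sum _ _).symm
      _ ≤ Real.exp (∑' j, a j) :=
          Real.exp_le_exp.2 (Summable.sum_le_tsum _ (fun i _ => ha i) hsa)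
  set y : ℕ → ℝ := fun k => v k / P k with hydef
  have hy0 : ∀ k, 0 ≤ y k := fun k => div_nonneg (hv k) (hPpos k).le
  have key : ∀ k, y (k + 1) + u k / P (k + 1) ≤ y k + w k / P (k + 1) := by
    intro k
    have h1 : (0:ℝ) < P (k + 1) := hPpos _
    have h2 : v (k + 1) + u k ≤ v k * (1 + a k) + w k := by nlinarith [hrec k]
    have h3 : (v (k + 1) + u k) / P (k + 1) ≤ (v k * (1 + a k) + w k) / P (k + 1) := by
      gcongr
    have h4 : v k * (1 + a k) / P (k + 1) = v k / P k := by
      rw [hPsucc k]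
      have hak : (0:ℝ) < 1 + a k := by linarith [ha k]
      rw [mul_comm (P k) (1 + a k), mul_comm (v k) (1 + a k), mul_div_mul_left _ _ hak.ne']
    calc y (k + 1) + u k / P (k + 1) = (v (k + 1) + u k) / P (k + 1) := by
          rw [add_div]
      _ ≤ (v k * (1 + a k) + w k) / P (k + 1) := h3
      _ = y k + w k / P (k + 1) := by rw [add_div, h4]
  set Su : ℕ → ℝ := fun n => ∑ j ∈ Finset.range n, u j / P (j + 1) with hSudef
  set Sw : ℕ → ℝ := fun n => ∑ j ∈ Finset.range n, w j / P (j + 1) with hSwdef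
  set t : ℕ → ℝ := fun n => y n + Su n - Sw n with htdef
  have hwP : ∀ j, w j / P (j + 1) ≤ w j := fun j => div_le_self (hw j) (hP1 _)
  have hSwle : ∀ n, Sw n ≤ ∑' j, w j := by
    intro n
    calc Sw n ≤ ∑ j ∈ Finset.range n, w j :=
          Finset.sum_le_sum (fun j _ => hwP j)
      _ ≤ ∑' j, w j := Summable.sum_le_tsum _ (fun i _ => hw i) hsw
  have hSw0 : ∀ n, 0 ≤ Sw n := fun n =>
    Finset.sum_nonneg (fun j _ => div_nonneg (hw j) (hPpos _).le)
  have hSu0 : ∀ n, 0 ≤ Su n := fun n =>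
    Finset.sum_nonneg (fun j _ => div_nonneg (hu j) (hPpos _).le)
  have ht_anti : Antitone t := by
    apply antitone_nat_of_succ_le
    intro n
    have := key n
    simp only [htdef, hSudef, hSwdef, Finset.sum_range_succ]
    linarith
  have ht_lb : ∀ n, -(∑' j, w j) ≤ t n := by
    intro n
    have := hSwle n
    have := hy0 n
    have := hSu0 n
    simp only [htdef]
    linarith
  -- summability of u / P(·+1)
  have hsu' : Summable (fun k => u k / P (k + 1)) := by
    apply summable_of_sum_range_le (c := v 0 + ∑' j, w j)
      (fun j => div_nonneg (hu j) (hPpos _).le)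
    intro n
    have h1 : t n ≤ t 0 := ht_anti (Nat.zero_le n)
    have h2 : t 0 = v 0 := by simp [htdef, hSudef, hSwdef, hydef, hPdef]
    have h3 := hSwle n
    have h4 := hy0 n
    have : Su n = t n - y n + Sw n := by simp [htdef]; ring
    rw [show (∑ j ∈ Finset.range n, u j / P (j + 1)) = Su n from rfl, this]
    linarith
  have hsu : Summable u := by
    refine Summable.of_nonneg_of_le hu
      (f := fun k => Real.exp (∑' j, a j) * (u k / P (k + 1))) ?_ (hsu'.mul_left _)
    · intro k
      have hB := hPB (k + 1)
      have h1 : (0:ℝ) < P (k + 1) := hPpos _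
      have h2 : u k / P (k + 1) * P (k + 1) = u k := div_mul_cancel₀ _ h1.ne'
      show u k ≤ Real.exp (∑' j, a j) * (u k / P (k + 1))
      nlinarith [h2, hB, div_nonneg (hu k) h1.le]
  refine ⟨?_, hsu⟩
  -- convergences
  have hsw' : Summable (fun k => w k / P (k + 1)) :=
    Summable.of_nonneg_of_le (fun j => div_nonneg (hw j) (hPpos _).le) hwP hsw
  have htend_Su : Filter.Tendsto Su Filter.atTop (nhds (∑' k, u k / P (k + 1))) :=
    hsu'.hasSum.tendsto_sum_nat
  have htend_Sw : Filter.Tendsto Sw Filter.atTop (nhds (∑' k, w k / P (k + 1))) :=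
    hsw'.hasSum.tendsto_sum_nat
  have hbdd : BddBelow (Set.range t) := ⟨-(∑' j, w j), by rintro x ⟨n, rfl⟩; exact ht_lb n⟩
  have htend_t : Filter.Tendsto t Filter.atTop (nhds (⨅ n, t n)) :=
    tendsto_atTop_ciInf ht_anti hbdd
  have htend_y : Filter.Tendsto y Filter.atTop
      (nhds ((⨅ n, t n) - (∑' k, u k / P (k + 1)) + (∑' k, w k / P (k + 1)))) := by
    have : y = fun n => t n - Su n + Sw n := by
      funext n; simp [htdef]; ring
    rw [this]
    exact ((htend_t.sub htend_Su).add htend_Sw)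
  -- P converges
  have hPmono : Monotone P := by
    apply monotone_nat_of_le_succ
    intro n
    rw [hPsucc n]
    nlinarith [hPpos n, ha n]
  have hPbdd : BddAbove (Set.range P) :=
    ⟨Real.exp (∑' j, a j), by rintro x ⟨n, rfl⟩; exact hPB n⟩
  have htend_P : Filter.Tendsto P Filter.atTop (nhds (⨆ n, P n)) :=
    tendsto_atTop_ciSup hPmono hPbdd
  have hveq : v = fun n => y n * P n := by
    funext n
    simp only [hydef]
    exact (div_mul_cancel₀ (v n) (hPpos n).ne').symm
  set Y := (⨅ n, t n) - (∑' k, u k / P (k + 1)) + (∑' k, w k / P (k + 1))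
  have htend_v : Filter.Tendsto v Filter.atTop (nhds (Y * ⨆ n, P n)) := by
    rw [hveq]; exact htend_y.mul htend_P
  exact ⟨Y * ⨆ n, P n, ge_of_tendsto' htend_v hv, htend_v⟩
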